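/- arXiv:1806.01636 — 2 statements merged into one kernel-verified Lean document; each statement's English description precedes it below -/
import Mathlib

section
/- (In classical logic.) Every natural space is spreadlike; indeed, every natural space 𝒱 is isomorphic to a spread whose underlying tree is the tree (ℕ*,⊑) of natural Baire space. -/
/-! # Natural Topology: basic framework (Waaldijk) -/

/-- A pre-natural space: a countable set of basic dots with a decidable
pre-apartness `apart` and a decidable refinement partial order `refines`. -/
structure PreNaturalSpace (V : Type) : Type where
  countable' : Countable V
  apart : V → V → Prop
  refines : V → V → Prop
  apart_dec : DecidableRel apart
  refines_dec : DecidableRel refines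
  apart_symm : ∀ a b, apart a b → apart b a
  apart_irrefl : ∀ a, ¬ apart a a
  apart_mono : ∀ a b c, refines a b → apart c b → apart c a
  refines_refl : ∀ a, refines a a
  refines_trans : ∀ a b c, refines a b → refines b c → refines a c
  refines_antisymm : ∀ a b, refines a b → refines b a → a = b

namespace PreNaturalSpace

variable {V W : Type}

/-- `a ≺ b` : strict refinement. -/
def strict (P : PreNaturalSpace V) (a b : V) : Prop := P.refines a b ∧ a ≠ b

/-- A point is a shrinking sequence of dots deciding every apart pair of dots. -/
structure IsPoint (P : PreNaturalSpace V) (p : ℕ → V) : Prop where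
  mono : ∀ n, P.refines (p (n + 1)) (p n)
  shrink : ∀ n, ∃ m, P.strict (p m) (p n)
  decides : ∀ a b, P.apart a b → ∃ m, P.apart (p m) a ∨ P.apart (p m) b

/-- The set of points of a pre-natural space. -/
def Pt (P : PreNaturalSpace V) : Type := { p : ℕ → V // P.IsPoint p }

/-- `p` begins with the dot `a` : some `p m ≺ a`. -/
def begins (P : PreNaturalSpace V) (p : ℕ → V) (a : V) : Prop := ∃ m, P.strict (p m) a

/-- Apartness between a dot and a point. -/
def dApart (P : PreNaturalSpace V) (a : V) (p : ℕ → V) : Prop := ∃ m, P.apart (p m) a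

/-- Apartness between points. -/
def pApart (P : PreNaturalSpace V) (p q : P.Pt) : Prop := ∃ n, P.apart (p.1 n) (q.1 n)

/-- Equivalence of points: the negation of apartness. -/
def pEquiv (P : PreNaturalSpace V) (p q : P.Pt) : Prop := ¬ P.pApart p q

variable (P : PreNaturalSpace V)

lemma refines_of_le {p : ℕ → V} (hp : ∀ n, P.refines (p (n + 1)) (p n)) :
    ∀ {m k : ℕ}, m ≤ k → P.refines (p k) (p m) := by
  intro m k h
  induction h with
  | refl => exact P.refines_refl _
  | step h ih => exact P.refines_trans _ _ _ (hp _) ih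

lemma begins_mono {z : ℕ → V} (hz : P.IsPoint z) {a b : V} (hab : P.refines a b)
    (h : P.begins z a) : P.begins z b := by
  obtain ⟨j, hj1, hj2⟩ := h
  have hzb : P.refines (z j) b := P.refines_trans _ _ _ hj1 hab
  by_cases he : z j = b
  · obtain ⟨i, hi1, hi2⟩ := hz.shrink j
    exact ⟨i, P.refines_trans _ _ _ hi1 hzb, fun h' => hi2 (h'.trans he.symm)⟩
  · exact ⟨j, hzb, he⟩

/-- The natural (apartness) topology as a predicate on subsets of the point set. -/
def NatOpen (U : Set P.Pt) : Prop :=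
  ∀ x ∈ U, ∀ y : P.Pt, P.pApart y x ∨ ∃ m, { z : P.Pt | P.begins z.1 (y.1 m) } ⊆ U

instance instTopPt : TopologicalSpace P.Pt where
  IsOpen := P.NatOpen
  isOpen_univ := fun _ _ _ => Or.inr ⟨0, fun _ _ => trivial⟩
  isOpen_inter := by
    intro U U' hU hU' x hx y
    rcases hU x hx.1 y with h | ⟨m, hm⟩
    · exact Or.inl h
    rcases hU' x hx.2 y with h | ⟨k, hk⟩
    · exact Or.inl h
    refine Or.inr ⟨max m k, fun z hz => ⟨hm ?_, hk ?_⟩⟩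
    · exact P.begins_mono z.2 (P.refines_of_le y.2.mono (le_max_left m k)) hz
    · exact P.begins_mono z.2 (P.refines_of_le y.2.mono (le_max_right m k)) hz
  isOpen_sUnion := by
    intro S hS x hx y
    obtain ⟨U, hU, hxU⟩ := hx
    rcases hS U hU x hxU y with h | ⟨m, hm⟩
    · exact Or.inl h
    · exact Or.inr ⟨m, fun z hz => ⟨U, hU, hm hz⟩⟩

lemma pEquiv_refl (p : P.Pt) : P.pEquiv p p := fun ⟨_, h⟩ => P.apart_irrefl _ h

lemma pEquiv_symm {p q : P.Pt} (h : P.pEquiv p q) : P.pEquiv q p :=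
  fun ⟨n, hn⟩ => h ⟨n, P.apart_symm _ _ hn⟩

lemma pEquiv_trans {p q r : P.Pt} (hpq : P.pEquiv p q) (hqr : P.pEquiv q r) :
    P.pEquiv p r := by
  rintro ⟨n, hn⟩
  obtain ⟨m, hm⟩ := q.2.decides (p.1 n) (r.1 n) hn
  rcases hm with hm | hm
  · -- q.1 m apart from p.1 n
    refine hpq ⟨max m n, ?_⟩
    have h1 : P.apart (p.1 n) (q.1 (max m n)) :=
      P.apart_mono _ _ _ (P.refines_of_le q.2.mono (le_max_left m n)) (P.apart_symm _ _ hm)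
    have h2 : P.apart (q.1 (max m n)) (p.1 (max m n)) :=
      P.apart_mono _ _ _ (P.refines_of_le p.2.mono (le_max_right m n)) (P.apart_symm _ _ h1)
    exact P.apart_symm _ _ h2
  · refine hqr ⟨max m n, ?_⟩
    have h1 : P.apart (r.1 n) (q.1 (max m n)) :=
      P.apart_mono _ _ _ (P.refines_of_le q.2.mono (le_max_left m n)) (P.apart_symm _ _ hm)
    exact P.apart_mono _ _ _ (P.refines_of_le r.2.mono (le_max_right m n))
      (P.apart_symm _ _ h1)

/-- The setoid of points modulo `≡`. -/
def ptSetoid : Setoid P.Pt :=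
  ⟨P.pEquiv, ⟨P.pEquiv_refl, P.pEquiv_symm, P.pEquiv_trans⟩⟩

/-- `â` : the set of points beginning with the dot `a`. -/
def hatSet (a : V) : Set P.Pt := { p | P.begins p.1 a }

/-- `ā` : the `≡`-closure of `â`. -/
def barSet (a : V) : Set P.Pt := { p | ∃ q : P.Pt, P.begins q.1 a ∧ P.pEquiv p q }

/-- A natural space is basic-open when every `ā` is open. -/
def BasicOpen : Prop := ∀ a : V, IsOpen (P.barSet a)

/-- Existence of a maximal dot. -/
def HasMaxDot : Prop := ∃ m, ∀ a, P.refines a m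

/-- Every basic dot begins at least one point. -/
def AllDotsInhabited : Prop := ∀ a : V, ∃ p : ℕ → V, P.IsPoint p ∧ P.begins p a

/-- The conditions making the point set of a pre-natural space a natural space. -/
def IsNaturalSpace : Prop := P.HasMaxDot ∧ P.AllDotsInhabited

end PreNaturalSpace

/-- A refinement morphism between (pre-)natural spaces: a map on dots sending
points to points and reflecting apartness of points. -/
structure RefMorphism {V W : Type} (P : PreNaturalSpace V) (Q : PreNaturalSpace W) : Type where
  toFun : V → W
  maps_points : ∀ p : ℕ → V, P.IsPoint p → Q.IsPoint (fun n => toFun (p n))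
  reflects_apart : ∀ p q : ℕ → V, P.IsPoint p → P.IsPoint q →
    (∃ n, Q.apart (toFun (p n)) (toFun (q n))) → ∃ n, P.apart (p n) (q n)

/-- The induced map on points of a refinement morphism. -/
def RefMorphism.pointMap {V W : Type} {P : PreNaturalSpace V} {Q : PreNaturalSpace W}
    (f : RefMorphism P Q) (p : P.Pt) : Q.Pt :=
  ⟨fun n => f.toFun (p.1 n), f.maps_points p.1 p.2⟩

namespace PreNaturalSpace

variable {V W : Type} (P : PreNaturalSpace V)

/-- Restriction of a pre-natural space to a subset of dots. -/
noncomputable def restrict (S : Set V) : PreNaturalSpace S where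
  countable' := by haveI := P.countable'; exact inferInstance
  apart a b := P.apart a.1 b.1
  refines a b := P.refines a.1 b.1
  apart_dec := Classical.decRel _
  refines_dec := Classical.decRel _
  apart_symm _ _ h := P.apart_symm _ _ h
  apart_irrefl a := P.apart_irrefl a.1
  apart_mono _ _ _ h1 h2 := P.apart_mono _ _ _ h1 h2
  refines_refl a := P.refines_refl a.1
  refines_trans _ _ _ h1 h2 := P.refines_trans _ _ _ h1 h2
  refines_antisymm _ _ h1 h2 := Subtype.ext (P.refines_antisymm _ _ h1 h2)

/-! ## Trail spaces -/

/-- A `≺`-trail: a finite strictly refining sequence `a₀ ≻ a₁ ≻ …`. -/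
def Trail : Type := { l : List V // l.Chain' fun a b => P.strict b a }

lemma strict_trans_flip : Transitive (fun a b : V => P.strict b a) := by
  rintro a b c ⟨h1, h1'⟩ ⟨h2, h2'⟩
  refine ⟨P.refines_trans _ _ _ h2 h1, fun he => ?_⟩
  exact h2' (P.refines_antisymm _ _ h2 (he ▸ h1))

lemma last_refines_of_prefix {a b : List V}
    (ha : a.Chain' fun x y => P.strict y x) (hpre : b <+: a)
    {x y : V} (hx : x ∈ a.getLast?) (hy : y ∈ b.getLast?) :
    P.refines x y := by
  haveI : IsTrans V (fun x y : V => P.strict y x) := ⟨fun _ _ _ h1 h2 => P.strict_trans_flip h1 h2⟩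
  have hpw : a.Pairwise fun x y => P.strict y x := List.isChain_iff_pairwise.mp ha
  obtain ⟨t, rfl⟩ := hpre
  rcases eq_or_ne t [] with rfl | ht
  · rw [List.append_nil] at hx
    have : x = y := by
      rw [Option.mem_def] at hx hy
      exact Option.some_injective _ (hx ▸ hy ▸ rfl)
    exact this ▸ P.refines_refl x
  · rw [List.getLast?_append_of_ne_nil _ ht] at hx
    have hxt : x ∈ t := List.mem_of_mem_getLast? hx
    have hyb : y ∈ b := List.mem_of_mem_getLast? hy
    have := (List.pairwise_append.mp hpw).2.2 y hyb x hxt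
    exact this.1

/-- The trail space of a pre-natural space: dots are `≺`-trails, with
`a ⊑* b` iff `b` is an initial segment of `a`, and `a #* b` iff the last
dots of `a` and `b` are apart. -/
noncomputable def trailSpace : PreNaturalSpace P.Trail where
  countable' := by haveI := P.countable'; exact inferInstanceAs (Countable
    { l : List V // l.Chain' fun a b => P.strict b a })
  apart a b := ∃ x ∈ a.1.getLast?, ∃ y ∈ b.1.getLast?, P.apart x y
  refines a b := b.1 <+: a.1
  apart_dec := Classical.decRel _
  refines_dec := Classical.decRel _
  apart_symm := by
    rintro a b ⟨x, hx, y, hy, hxy⟩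
    exact ⟨y, hy, x, hx, P.apart_symm _ _ hxy⟩
  apart_irrefl := by
    rintro a ⟨x, hx, y, hy, hxy⟩
    rw [Option.mem_def] at hx hy
    have : x = y := Option.some_injective _ (hx ▸ hy ▸ rfl)
    exact P.apart_irrefl x (this ▸ hxy)
  apart_mono := by
    rintro a b c hab ⟨x, hx, y, hy, hxy⟩
    have hbne : b.1 ≠ [] := by
      intro h
      rw [h] at hy
      simp at hy
    have hane : a.1 ≠ [] := by
      intro h
      exact hbne (List.prefix_nil.mp (h ▸ hab))
    obtain ⟨z, hz⟩ : ∃ z, z ∈ a.1.getLast? := by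
      rcases h : a.1.getLast? with _ | z
      · exact absurd (List.getLast?_eq_none_iff.mp h) hane
      · exact ⟨z, rfl⟩
    have hzy : P.refines z y := P.last_refines_of_prefix a.2 hab hz hy
    exact ⟨x, hx, z, hz, P.apart_mono _ _ _ hzy hxy⟩
  refines_refl a := List.prefix_refl a.1
  refines_trans _ _ _ h1 h2 := h2.trans h1
  refines_antisymm a b h1 h2 :=
    Subtype.ext (h2.eq_of_length (le_antisymm h2.length_le h1.length_le))

end PreNaturalSpace

open Classical in
/-- `p♯(n)` : the `≺`-trail obtained from `p₀, …, p_{n-1}` by deleting repetitions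
(for a shrinking sequence `p`, repetitions are consecutive). -/
noncomputable def segList {V : Type} (p : ℕ → V) : ℕ → List V
  | 0 => []
  | n + 1 =>
    if (segList p n).getLast? = some (p n) then segList p n
    else segList p n ++ [p n]

namespace PreNaturalSpace

variable {V W : Type} (P : PreNaturalSpace V)

/-- The map on trail dots sending a nonempty trail to its last element and
the empty trail to `m`. -/
def lastDot (m : V) (q : P.Trail) : V := q.1.getLast?.getD m

/-- `g` is the point map induced by a trail morphism `f` (a refinement morphism
on the trail space): `g p = f (p♯(0)), f (p♯(1)), …`. -/
def InducedByTrailMorphism (Q : PreNaturalSpace W) (f : RefMorphism P.trailSpace Q)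
    (g : P.Pt → Q.Pt) : Prop :=
  ∀ p : P.Pt, ∃ t : P.trailSpace.Pt, (∀ n, (t.1 n).1 = segList p.1 n) ∧ g p = f.pointMap t

/-- `g` is a natural morphism map: induced by a refinement morphism or by a trail morphism. -/
def IsNaturalMorphismMap (Q : PreNaturalSpace W) (g : P.Pt → Q.Pt) : Prop :=
  (∃ f : RefMorphism P Q, ∀ p, g p = f.pointMap p) ∨
  (∃ f : RefMorphism P.trailSpace Q, P.InducedByTrailMorphism Q f g)

/-- Two natural spaces are isomorphic: natural morphisms both ways, inverse up to `≡`. -/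
def AreIsomorphic (Q : PreNaturalSpace W) : Prop :=
  ∃ (f : P.Pt → Q.Pt) (g : Q.Pt → P.Pt),
    P.IsNaturalMorphismMap Q f ∧ Q.IsNaturalMorphismMap P g ∧
    (∀ x, P.pEquiv (g (f x)) x) ∧ (∀ y, Q.pEquiv (f (g y)) y)

/-- A natural space is a basic neighborhood space iff it is isomorphic to a basic-open space. -/
def IsBasicNbhdSpace : Prop :=
  ∃ (W' : Type) (Q : PreNaturalSpace W'), Q.IsNaturalSpace ∧ Q.BasicOpen ∧ P.AreIsomorphic Q

/-! ## Trees, treas, spreads, spraids, fans -/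

/-- `a` is a successor of `c`. -/
def IsSucc (a c : V) : Prop := P.strict a c ∧ ∀ b, P.strict a b → P.refines b c → b = c

/-- A successor-trail (as a list, each entry a successor of the previous one). -/
def SuccChain (l : List V) : Prop := l.Chain' fun x y => P.IsSucc y x

/-- A successor-trail from `m` to `a`. -/
def IsSuccTrailFromTo (m a : V) (l : List V) : Prop :=
  P.SuccChain l ∧ l.head? = some m ∧ l.getLast? = some a

/-- `(V,⊑)` is a tree. -/
def IsTree : Prop :=
  ∃ m, (∀ a, P.refines a m) ∧ ∀ a, ∃! l : List V, P.IsSuccTrailFromTo m a l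

/-- `(V,⊑)` is a trea. -/
def IsTrea : Prop :=
  ∃ m, (∀ a, P.refines a m) ∧ (∀ a, { b | P.refines a b }.Finite) ∧
    ∀ a, ∃ g : ℕ, ∀ l : List V, P.IsSuccTrailFromTo m a l → l.length = g

/-- Every infinite successor-trail is a point. -/
def SuccTrailsArePoints : Prop :=
  ∀ q : ℕ → V, (∀ n, P.IsSucc (q (n + 1)) (q n)) → P.IsPoint q

def IsSpread : Prop := P.IsTree ∧ P.SuccTrailsArePoints

def IsSpraid : Prop := P.IsTrea ∧ P.SuccTrailsArePoints

/-- Finitely branching: every dot has finitely many successors. -/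
def FinBranching : Prop := ∀ a : V, { b | P.IsSucc b a }.Finite

def IsFan : Prop := P.IsSpread ∧ P.FinBranching

def IsFann : Prop := P.IsSpraid ∧ P.FinBranching

end PreNaturalSpace
/-! ## Natural Baire space and natural Cantor space -/

/-- Natural Baire space: dots are finite sequences of naturals, `b ⊑ a` iff
`a` is an initial segment of `b`, apart iff incomparable. -/
noncomputable def BairePre : PreNaturalSpace (List ℕ) where
  countable' := inferInstance
  apart a b := ¬ a <+: b ∧ ¬ b <+: a
  refines a b := b <+: a
  apart_dec := Classical.decRel _
  refines_dec := Classical.decRel _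
  apart_symm _ _ h := ⟨h.2, h.1⟩
  apart_irrefl a h := h.1 (List.prefix_refl a)
  apart_mono := by
    intro a b c hab hcb
    constructor
    · intro hca
      rcases List.prefix_or_prefix_of_prefix hca hab with h | h
      · exact hcb.1 h
      · exact hcb.2 h
    · intro hac
      exact hcb.2 (hab.trans hac)
  refines_refl a := List.prefix_refl a
  refines_trans _ _ _ h1 h2 := h2.trans h1
  refines_antisymm _ _ h1 h2 := h2.eq_of_length (le_antisymm h2.length_le h1.length_le)

/-- Natural Cantor space: the restriction of natural Baire space to finite 0-1 sequences. -/
noncomputable def CantorPre : PreNaturalSpace ({ l : List ℕ | ∀ x ∈ l, x ≤ 1 }) :=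
  BairePre.restrict { l : List ℕ | ∀ x ∈ l, x ≤ 1 }

/-- The sequence of initial segments of `α ∈ ℕ^ℕ`. -/
def initSegs (α : ℕ → ℕ) (n : ℕ) : List ℕ := (List.range n).map α

/-! ## Auxiliary development for Statement 10 -/

section Stmt10Aux

open Classical List

namespace PreNaturalSpace

variable {V : Type} (P : PreNaturalSpace V)

lemma strict_of_refines_strict {a b c : V} (h1 : P.refines a b) (h2 : P.strict b c) :
    P.strict a c := by
  refine ⟨P.refines_trans _ _ _ h1 h2.1, fun he => h2.2 ?_⟩
  subst he
  exact P.refines_antisymm _ _ h2.1 h1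

lemma strict_of_strict_refines {a b c : V} (h1 : P.strict a b) (h2 : P.refines b c) :
    P.strict a c := by
  refine ⟨P.refines_trans _ _ _ h1.1 h2, fun he => h1.2 ?_⟩
  subst he
  exact P.refines_antisymm _ _ h1.1 h2

lemma not_apart_of_refines {a b : V} (h : P.refines a b) : ¬ P.apart a b := fun hab =>
  P.apart_irrefl a (P.apart_mono a b a h hab)

lemma not_apart_of_refines' {a b : V} (h : P.refines a b) : ¬ P.apart b a := fun hab =>
  P.not_apart_of_refines h (P.apart_symm _ _ hab)

lemma apart_mono' {a b x : V} (h : P.refines a b) (hx : P.apart b x) : P.apart a x :=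
  P.apart_symm _ _ (P.apart_mono a b x h (P.apart_symm _ _ hx))

lemma point_not_apart {p : ℕ → V} (hp : P.IsPoint p) (i j : ℕ) : ¬ P.apart (p i) (p j) := by
  rcases le_total i j with h | h
  · exact P.not_apart_of_refines' (P.refines_of_le hp.mono h)
  · exact P.not_apart_of_refines (P.refines_of_le hp.mono h)

/-- Chains of strict refinements. -/
abbrev Chn (l : List V) : Prop := l.Chain' fun a b => P.strict b a

lemma chain_pairwise {l : List V} (h : P.Chn l) : l.Pairwise fun a b => P.strict b a := by
  haveI : IsTrans V (fun x y : V => P.strict y x) := ⟨fun _ _ _ h1 h2 => P.strict_trans_flip h1 h2⟩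
  exact List.isChain_iff_pairwise.mp h

lemma chain_nodup {l : List V} (h : P.Chn l) : l.Nodup :=
  (P.chain_pairwise h).imp fun hr => Ne.symm hr.2

lemma chain_last_refines {l : List V} (h : P.Chn l) {x y : V} (hx : x ∈ l)
    (hy : l.getLast? = some y) : P.refines y x := by
  have hp := P.chain_pairwise h
  have hne : l ≠ [] := by rintro rfl; simp at hy
  have hdl : l.dropLast ++ [l.getLast hne] = l := List.dropLast_append_getLast hne
  have hyl : y = l.getLast hne := by
    rw [List.getLast?_eq_getLast hne] at hy
    exact (Option.some_inj.mp hy).symm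
  subst hyl
  rw [← hdl] at hp hx
  rcases List.mem_append.mp hx with hx | hx
  · exact ((List.pairwise_append.mp hp).2.2 x hx _ (List.mem_singleton_self _)).1
  · rw [List.mem_singleton.mp hx]
    exact P.refines_refl _

end PreNaturalSpace

/-- Generic: a prefix-monotone sequence of lists with cofinally many proper
extensions has unbounded lengths. -/
lemma len_unbounded {X : Type} {u : ℕ → List X} (hm : ∀ {k l : ℕ}, k ≤ l → u k <+: u l)
    (hs : ∀ n, ∃ m, u n <+: u m ∧ u m ≠ u n) (N : ℕ) : ∃ M, N ≤ (u M).length := by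
  induction N with
  | zero => exact ⟨0, Nat.zero_le _⟩
  | succ N ih =>
    obtain ⟨M, hM⟩ := ih
    obtain ⟨m, pre, ne⟩ := hs M
    refine ⟨m, ?_⟩
    have h1 : (u M).length ≤ (u m).length := pre.length_le
    have h2 : (u M).length ≠ (u m).length := fun h => ne (pre.eq_of_length h).symm
    omega

namespace Stmt10Aux

open Classical List PreNaturalSpace

variable {V : Type} (P : PreNaturalSpace V)
variable (mx : V) (e : ℕ → V) (pe : ℕ → V × V) (st : V → ℕ → V) (enc : V → ℕ)

/-- The acceptance condition: `b` strictly refines `a` and decides the `i`-th pair. -/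
def Ok (a : V) (i : ℕ) (b : V) : Prop :=
  P.strict b a ∧ (P.apart (pe i).1 (pe i).2 → P.apart b (pe i).1 ∨ P.apart b (pe i).2)

noncomputable def nxt (a : V) (i : ℕ) (n : ℕ) : V :=
  if Ok P pe a i (e n) then e n else st a i

variable {P pe st} in
lemma nxt_ok (hst : ∀ a i, Ok P pe a i (st a i)) (a : V) (i n : ℕ) :
    Ok P pe a i (nxt P e pe st a i n) := by
  unfold nxt
  split_ifs with h
  · exact h
  · exact hst a i

noncomputable def cA : V → ℕ → List ℕ → V
  | a, _, [] => a
  | a, i, n :: s => cA (nxt P e pe st a i n) (i + 1) s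

lemma cA_append (a : V) (i : ℕ) (s u : List ℕ) :
    cA P e pe st a i (s ++ u) = cA P e pe st (cA P e pe st a i s) (i + s.length) u := by
  induction s generalizing a i with
  | nil => simp [cA]
  | cons n s ih =>
    show cA P e pe st (nxt P e pe st a i n) (i+1) (s ++ u) = _
    rw [ih]
    have : i + (n :: s).length = (i + 1) + s.length := by simp; omega
    rw [this]
    rfl

section WithHyp

variable {P pe st}
variable (hst : ∀ a i, Ok P pe a i (st a i))
include hst

lemma cA_refines (a : V) (i : ℕ) (s : List ℕ) : P.refines (cA P e pe st a i s) a := by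
  induction s generalizing a i with
  | nil => exact P.refines_refl a
  | cons n s ih =>
    exact P.refines_trans _ _ _ (ih _ _) (nxt_ok e hst a i n).1.1

lemma cA_strict (a : V) (i : ℕ) {s : List ℕ} (hs : s ≠ []) :
    P.strict (cA P e pe st a i s) a := by
  cases s with
  | nil => exact absurd rfl hs
  | cons n s =>
    have h1 := cA_refines e hst (nxt P e pe st a i n) (i+1) s
    have h2 := (nxt_ok e hst a i n).1
    simpa [cA] using P.strict_of_refines_strict h1 h2

end WithHyp

noncomputable def cc (s : List ℕ) : V := cA P e pe st mx 0 s

section WithHyp2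

variable {P pe st}
variable (hst : ∀ a i, Ok P pe a i (st a i))
include hst

lemma cc_mono {s u : List ℕ} (h : s <+: u) : P.refines (cc P mx e pe st u) (cc P mx e pe st s) := by
  obtain ⟨v, rfl⟩ := h
  unfold cc
  rw [cA_append]
  exact cA_refines e hst _ _ _

lemma cc_strict {s u : List ℕ} (h : s <+: u) (hne : u ≠ s) :
    P.strict (cc P mx e pe st u) (cc P mx e pe st s) := by
  obtain ⟨v, rfl⟩ := h
  have hv : v ≠ [] := by rintro rfl; simp at hne
  unfold cc
  rw [cA_append]
  exact cA_strict e hst _ _ hv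

end WithHyp2

lemma cc_snoc (s : List ℕ) (n : ℕ) :
    cc P mx e pe st (s ++ [n]) = nxt P e pe st (cc P mx e pe st s) s.length n := by
  unfold cc
  rw [cA_append]
  simp [cA]

variable {P pe st} in
lemma cc_ok_snoc (hst : ∀ a i, Ok P pe a i (st a i)) (s : List ℕ) (n : ℕ) :
    Ok P pe (cc P mx e pe st s) s.length (cc P mx e pe st (s ++ [n])) := by
  rw [cc_snoc]
  exact nxt_ok e hst _ _ _

variable {P pe st} in
lemma cc_decides (hst : ∀ a i, Ok P pe a i (st a i)) {s : List ℕ} {i : ℕ} (hi : i < s.length)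
    (h : P.apart (pe i).1 (pe i).2) :
    P.apart (cc P mx e pe st s) (pe i).1 ∨ P.apart (cc P mx e pe st s) (pe i).2 := by
  have hts : s.take (i+1) = s.take i ++ [s.get ⟨i, hi⟩] := by
    rw [List.take_succ]
    simp [List.getElem?_eq_getElem hi]
  have hok := cc_ok_snoc mx e hst (s.take i) (s.get ⟨i, hi⟩)
  rw [← hts, List.length_take, min_eq_left hi.le] at hok
  have hr : P.refines (cc P mx e pe st s) (cc P mx e pe st (s.take (i+1))) :=
    cc_mono mx e hst (List.take_prefix _ _)
  exact (hok.2 h).imp (P.apart_mono' hr) (P.apart_mono' hr)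


/-! ### The spread `Qs` -/

variable {P pe st} in
noncomputable def Qs (hst : ∀ a i, Ok P pe a i (st a i)) : PreNaturalSpace (List ℕ) where
  countable' := inferInstance
  apart s t := P.apart (cc P mx e pe st s) (cc P mx e pe st t)
  refines s t := t <+: s
  apart_dec := Classical.decRel _
  refines_dec := Classical.decRel _
  apart_symm _ _ h := P.apart_symm _ _ h
  apart_irrefl _ := P.apart_irrefl _
  apart_mono _ _ _ h1 h2 := P.apart_mono _ _ _ (cc_mono mx e hst h1) h2
  refines_refl a := List.prefix_refl a
  refines_trans _ _ _ h1 h2 := h2.trans h1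
  refines_antisymm _ _ h1 h2 := h2.eq_of_length (le_antisymm h2.length_le h1.length_le)

section QsFacts

variable {P pe st}
variable (hst : ∀ a i, Ok P pe a i (st a i))

lemma Qs_succ_iff (s t : List ℕ) :
    (Qs mx e hst).IsSucc s t ↔ ∃ n, s = t ++ [n] := by
  constructor
  · rintro ⟨⟨hpre, hne⟩, hmin⟩
    have hpre : t <+: s := hpre
    have hlt : t.length < s.length :=
      lt_of_le_of_ne hpre.length_le (fun h => hne (hpre.eq_of_length h).symm)
    set b := s.take (t.length + 1) with hb
    have hbs : b <+: s := List.take_prefix _ _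
    have ht' : t = s.take t.length := List.prefix_iff_eq_take.mp hpre
    have htb : t <+: b := by
      rw [ht', hb]
      exact List.take_isPrefix_take.mpr (Or.inl (Nat.le_succ _))
    have hblen : b.length = t.length + 1 := by rw [hb, List.length_take]; omega
    have hbt : b ≠ t := by intro h; rw [h] at hblen; omega
    have hbs' : b = s := by
      by_contra hne2
      exact hbt (hmin b ⟨hbs, fun hh => hne2 hh.symm⟩ htb)
    refine ⟨s.get ⟨t.length, hlt⟩, ?_⟩
    have hthis : b = t ++ [s.get ⟨t.length, hlt⟩] := by
      rw [hb, List.take_succ, ← ht']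
      simp [List.getElem?_eq_getElem hlt]
    exact hbs'.symm.trans hthis
  · rintro ⟨n, rfl⟩
    constructor
    · refine ⟨⟨[n], rfl⟩, fun h => ?_⟩
      apply_fun List.length at h
      simp at h
    · rintro b ⟨hb1, hb2⟩ hbt
      have hb1 : b <+: t ++ [n] := hb1
      have hbt : t <+: b := hbt
      have h1 : b.length ≤ t.length + 1 := by simpa using hb1.length_le
      have h2 : t.length ≤ b.length := hbt.length_le
      rcases eq_or_lt_of_le h1 with h | h
      · exfalso
        apply hb2
        have := hb1.eq_of_length (by simpa using h)
        rw [this]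
      · exact (hbt.eq_of_length (by omega)).symm

/-- The canonical successor-trail from `[]` to `a`. -/
def trailTo (a : List ℕ) : List (List ℕ) := (List.range (a.length + 1)).map a.take

lemma trailTo_spec (a : List ℕ) :
    (Qs mx e hst).IsSuccTrailFromTo [] a (trailTo a) := by
  refine ⟨?_, ?_, ?_⟩
  · unfold PreNaturalSpace.SuccChain trailTo List.Chain'
    rw [List.isChain_map, List.isChain_range_succ]
    intro m hm
    rw [Qs_succ_iff]
    refine ⟨a.get ⟨m, hm⟩, ?_⟩
    rw [List.take_succ]
    simp [List.getElem?_eq_getElem hm]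
  · unfold trailTo
    rw [List.head?_map]
    simp [List.range_succ_eq_map]
  · unfold trailTo
    rw [List.getLast?_map, List.range_succ]
    simp

lemma trailTo_unique {l : List (List ℕ)} (hc : (Qs mx e hst).SuccChain l) {a : List ℕ}
    (hh : l.head? = some []) (hl : l.getLast? = some a) : l = trailTo a := by
  induction l using List.reverseRecOn generalizing a with
  | nil => simp at hh
  | append_singleton l x ih =>
    rw [List.getLast?_concat] at hl
    have hx : x = a := Option.some_inj.mp hl
    subst hx
    rcases eq_or_ne l [] with rfl | hlne
    · simp at hh
      subst hh
      simp [trailTo, List.range_succ]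
    · unfold PreNaturalSpace.SuccChain List.Chain' at hc
      rw [List.isChain_append] at hc
      obtain ⟨hc1, _, hrel⟩ := hc
      obtain ⟨tl, htl⟩ : ∃ tl, l.getLast? = some tl := by
        cases h : l.getLast? with
        | none => exact absurd (List.getLast?_eq_none_iff.mp h) hlne
        | some tl => exact ⟨tl, rfl⟩
      have hsucc : (Qs mx e hst).IsSucc x tl := hrel tl htl x (by simp)
      obtain ⟨n, rfl⟩ := (Qs_succ_iff mx e hst _ _).mp hsucc
      have hh' : l.head? = some [] := by
        rwa [List.head?_append_of_ne_nil _ hlne] at hh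
      have key : trailTo (tl ++ [n]) = trailTo tl ++ [tl ++ [n]] := by
        unfold trailTo
        have hlen : (tl ++ [n]).length + 1 = (tl.length + 1) + 1 := by simp
        rw [hlen, List.range_succ, List.map_append]
        congr 1
        · apply List.map_congr_left
          intro k hk
          rw [List.mem_range] at hk
          exact List.take_append_of_le_length (by omega)
        · simp only [List.map_cons, List.map_nil]
          have h2 : (tl ++ [n]).length = tl.length + 1 := by simp
          rw [← h2, List.take_length]
      rw [ih hc1 hh' htl, key]

lemma Qs_isTree : (Qs mx e hst).IsTree := by
  refine ⟨[], fun _ => List.nil_prefix, fun a => ?_⟩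
  exact ⟨trailTo a, trailTo_spec mx e hst a,
    fun l hl => trailTo_unique mx e hst hl.1 hl.2.1 hl.2.2⟩

end QsFacts


section QsFacts2

variable {P pe st}
variable (hst : ∀ a i, Ok P pe a i (st a i))

lemma Qs_succTrails (hpecof : ∀ (v : V × V) (N : ℕ), ∃ i, N ≤ i ∧ pe i = v) :
    (Qs mx e hst).SuccTrailsArePoints := by
  intro q hq
  have hsnoc : ∀ n, ∃ k, q (n+1) = q n ++ [k] := fun n => (Qs_succ_iff mx e hst _ _).mp (hq n)
  have hlen : ∀ n, (q n).length = (q 0).length + n := by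
    intro n
    induction n with
    | zero => rfl
    | succ n ih =>
      obtain ⟨k, hk⟩ := hsnoc n
      rw [hk]
      simp [ih]
      omega
  have hmono' : ∀ n, q n <+: q (n+1) := by
    intro n
    obtain ⟨k, hk⟩ := hsnoc n
    rw [hk]
    exact ⟨[k], rfl⟩
  refine ⟨hmono', fun n => ⟨n + 1, hmono' n, fun h => ?_⟩, ?_⟩
  · apply_fun List.length at h
    rw [hlen (n+1), hlen n] at h
    omega
  · intro s s' hap
    obtain ⟨i, hiN, hpei⟩ := hpecof (cc P mx e pe st s, cc P mx e pe st s') ((q 0).length)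
    set d := i - (q 0).length with hd
    have hqd : (q d).length = i := by rw [hlen]; omega
    obtain ⟨k, hk⟩ := hsnoc d
    have hok := cc_ok_snoc mx e hst (q d) k
    rw [hqd, ← hk] at hok
    have h2 := hok.2
    rw [hpei] at h2
    exact ⟨d + 1, h2 hap⟩

lemma Qs_natural (hpecof : ∀ (v : V × V) (N : ℕ), ∃ i, N ≤ i ∧ pe i = v) :
    (Qs mx e hst).IsNaturalSpace := by
  refine ⟨⟨[], fun _ => List.nil_prefix⟩, fun s => ?_⟩
  set p : ℕ → List ℕ := fun k => s ++ List.replicate k 0 with hp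
  have hsucc : ∀ n, (Qs mx e hst).IsSucc (p (n+1)) (p n) := by
    intro n
    rw [Qs_succ_iff]
    refine ⟨0, ?_⟩
    simp [hp, List.replicate_succ']
  refine ⟨p, Qs_succTrails mx e hst hpecof p hsucc, 1, ⟨[0], by simp [hp]⟩, fun h => ?_⟩
  apply_fun List.length at h
  simp [hp] at h

lemma Qs_len_unbounded (q : (Qs mx e hst).Pt) (N : ℕ) : ∃ M, N ≤ (q.1 M).length := by
  apply len_unbounded (u := q.1)
  · intro k l h
    exact (Qs mx e hst).refines_of_le q.2.mono h
  · intro n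
    obtain ⟨m, hm1, hm2⟩ := q.2.shrink n
    exact ⟨m, hm1, hm2⟩

end QsFacts2

/-! ### The scan map, from trails of `P` to dots of `Qs` -/

noncomputable def scn : V → ℕ → List V → List ℕ
  | _, _, [] => []
  | a, i, b :: l => if Ok P pe a i b then enc b :: scn b (i+1) l else scn a i l

noncomputable def fnl : V → ℕ → List V → V
  | a, _, [] => a
  | a, i, b :: l => if Ok P pe a i b then fnl b (i+1) l else fnl a i l

section ScanFacts

variable {P e pe st enc}

lemma nxt_enc (henc : ∀ v, e (enc v) = v) {a b : V} {i : ℕ} (h : Ok P pe a i b) :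
    nxt P e pe st a i (enc b) = b := by
  unfold nxt
  rw [henc]
  exact if_pos h

lemma cA_scn (henc : ∀ v, e (enc v) = v) (l : List V) (a : V) (i : ℕ) :
    cA P e pe st a i (scn P pe enc a i l) = fnl P pe a i l := by
  induction l generalizing a i with
  | nil => rfl
  | cons b l ih =>
    simp only [scn, fnl]
    split_ifs with h
    · show cA P e pe st (nxt P e pe st a i (enc b)) (i+1) (scn P pe enc b (i+1) l) = _
      rw [nxt_enc henc h]
      exact ih b (i+1)
    · exact ih a i

lemma scn_append (l u : List V) (a : V) (i : ℕ) :
    scn P pe enc a i (l ++ u) =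
      scn P pe enc a i l ++
        scn P pe enc (fnl P pe a i l) (i + (scn P pe enc a i l).length) u := by
  induction l generalizing a i with
  | nil => simp [scn, fnl]
  | cons b l ih =>
    simp only [List.cons_append, scn, fnl]
    split_ifs with h
    · rw [ih b (i+1)]
      simp only [List.cons_append, List.length_cons]
      have he : i + ((scn P pe enc b (i+1) l).length + 1) =
          (i + 1) + (scn P pe enc b (i+1) l).length := by omega
      rw [he]
    · exact ih a i

lemma fnl_refines (l : List V) (a : V) (i : ℕ) : P.refines (fnl P pe a i l) a := by
  induction l generalizing a i with
  | nil => exact P.refines_refl a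
  | cons b l ih =>
    simp only [fnl]
    split_ifs with h
    · exact P.refines_trans _ _ _ (ih b (i+1)) h.1.1
    · exact ih a i

lemma fnl_mem (l : List V) (a : V) (i : ℕ) : fnl P pe a i l = a ∨ fnl P pe a i l ∈ l := by
  induction l generalizing a i with
  | nil => exact Or.inl rfl
  | cons b l ih =>
    simp only [fnl]
    split_ifs with h
    · rcases ih b (i+1) with h' | h'
      · exact Or.inr (List.mem_cons.mpr (Or.inl h'))
      · exact Or.inr (List.mem_cons_of_mem b h')
    · rcases ih a i with h' | h'
      · exact Or.inl h'
      · exact Or.inr (List.mem_cons_of_mem b h')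

lemma fnl_mem_of_scn_ne {l : List V} {a : V} {i : ℕ} (h : scn P pe enc a i l ≠ []) :
    fnl P pe a i l ∈ l := by
  induction l generalizing a i with
  | nil => exact absurd rfl h
  | cons b l ih =>
    simp only [fnl]
    split_ifs with hok
    · rcases fnl_mem l b (i+1) with h' | h'
      · exact List.mem_cons.mpr (Or.inl h')
      · exact List.mem_cons_of_mem b h'
    · simp only [scn, if_neg hok] at h
      exact List.mem_cons_of_mem b (ih h)

lemma scn_ne_nil {l : List V} {b : V} (hb : b ∈ l) {a : V} {i : ℕ} (hOk : Ok P pe a i b) :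
    scn P pe enc a i l ≠ [] := by
  induction l generalizing a i with
  | nil => simp at hb
  | cons x l ih =>
    simp only [scn]
    split_ifs with h
    · simp
    · rcases List.mem_cons.mp hb with rfl | hb'
      · exact absurd hOk h
      · exact ih hb' hOk

lemma scn_mono {l u : List V} (h : l <+: u) (a : V) (i : ℕ) :
    scn P pe enc a i l <+: scn P pe enc a i u := by
  obtain ⟨v, rfl⟩ := h
  rw [scn_append]
  exact ⟨_, rfl⟩

lemma scn_len_le (l : List V) (a : V) (i : ℕ) : (scn P pe enc a i l).length ≤ l.length := by
  induction l generalizing a i with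
  | nil => simp [scn]
  | cons b l ih =>
    simp only [scn]
    split_ifs with h
    · simpa using ih b (i+1)
    · exact le_trans (ih a i) (by simp)

lemma fnl_refines_last {l : List V} (hl : P.Chn l) {l₀ : List V} (hpre : l₀ <+: l)
    {a : V} {i : ℕ} (hlen : l₀.length ≤ (scn P pe enc a i l).length) {y : V}
    (hy : l₀.getLast? = some y) : P.refines (fnl P pe a i l) y := by
  induction l generalizing l₀ a i with
  | nil =>
    rw [List.prefix_nil.mp hpre] at hy
    simp at hy
  | cons b l ih =>
    cases l₀ with
    | nil => simp at hy
    | cons b₀ l₀' =>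
      obtain ⟨rfl, hpre'⟩ := List.cons_prefix_cons.mp hpre
      simp only [scn, fnl] at hlen ⊢
      split_ifs with h
      · rw [if_pos h] at hlen
        cases l₀' with
        | nil =>
          simp only [List.getLast?_singleton, Option.some_inj] at hy
          subst hy
          exact fnl_refines l b₀ (i+1)
        | cons c rest =>
          rw [List.getLast?_cons_cons] at hy
          refine ih hl.tail hpre' ?_ hy
          simp only [List.length_cons] at hlen ⊢
          omega
      · rw [if_neg h] at hlen
        cases l₀' with
        | nil =>
          simp only [List.getLast?_singleton, Option.some_inj] at hy
          subst hy
          have hne : scn P pe enc a i l ≠ [] := by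
            intro hnil
            rw [hnil] at hlen
            simp at hlen
          have hmem := fnl_mem_of_scn_ne hne
          have hpw := P.chain_pairwise hl
          exact ((List.pairwise_cons.mp hpw).1 _ hmem).1
        | cons c rest =>
          rw [List.getLast?_cons_cons] at hy
          refine ih hl.tail hpre' ?_ hy
          exact le_trans (by simp) hlen

end ScanFacts


/-! ### `segList` facts -/

section SegList

variable {V : Type} (P : PreNaturalSpace V)

lemma segList_succ (p : ℕ → V) (n : ℕ) :
    segList p (n+1) = if (segList p n).getLast? = some (p n) then segList p n
      else segList p n ++ [p n] := by
  rw [segList]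

lemma segList_last (p : ℕ → V) (n : ℕ) :
    (segList p (n+1)).getLast? = some (p n) := by
  rw [segList_succ]
  split_ifs with h
  · exact h
  · exact List.getLast?_concat

lemma segList_ne (p : ℕ → V) (n : ℕ) : segList p (n+1) ≠ [] := by
  intro h
  have := segList_last p n
  rw [h] at this
  simp at this

lemma segList_prefix (p : ℕ → V) (n : ℕ) : segList p n <+: segList p (n+1) := by
  rw [segList_succ]
  split_ifs with h
  · exact List.prefix_refl _
  · exact ⟨[p n], rfl⟩

lemma segList_prefix_le (p : ℕ → V) {k l : ℕ} (h : k ≤ l) : segList p k <+: segList p l := by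
  induction h with
  | refl => exact List.prefix_refl _
  | step _ ih => exact ih.trans (segList_prefix p _)

lemma segList_mem {p : ℕ → V} {n : ℕ} {x : V} (h : x ∈ segList p n) :
    ∃ j, j < n ∧ x = p j := by
  induction n with
  | zero => simp [segList] at h
  | succ k ih =>
    rw [segList_succ] at h
    split_ifs at h with hc
    · obtain ⟨j, hj, he⟩ := ih h
      exact ⟨j, Nat.lt_succ_of_lt hj, he⟩
    · rcases List.mem_append.mp h with h' | h'
      · obtain ⟨j, hj, he⟩ := ih h'
        exact ⟨j, Nat.lt_succ_of_lt hj, he⟩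
      · exact ⟨k, Nat.lt_succ_self _, List.mem_singleton.mp h'⟩

lemma segList_chain {p : ℕ → V} (hmono : ∀ n, P.refines (p (n+1)) (p n)) (n : ℕ) :
    P.Chn (segList p n) := by
  induction n with
  | zero => exact List.isChain_nil
  | succ k ih =>
    rw [segList_succ]
    split_ifs with h
    · exact ih
    · refine List.isChain_append.mpr ⟨ih, List.isChain_singleton _, ?_⟩
      intro x hx y hy
      simp only [List.head?_cons, Option.mem_def, Option.some_inj] at hy
      subst hy
      cases k with
      | zero => simp [segList] at hx
      | succ j =>
        rw [Option.mem_def, segList_last] at hx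
        have hx' : x = p j := by injection hx.symm
        subst hx'
        refine ⟨hmono j, fun hne => ?_⟩
        rw [segList_last] at h
        exact h (by rw [hne])

end SegList

namespace Stmt10Aux2

open Classical List PreNaturalSpace Stmt10Aux

variable {V : Type} (P : PreNaturalSpace V)

/-! ### Trail-space helpers -/

lemma trail_mono (t : P.trailSpace.Pt) {k l : ℕ} (h : k ≤ l) : (t.1 k).1 <+: (t.1 l).1 :=
  P.trailSpace.refines_of_le t.2.mono h

lemma trail_len_unbounded (t : P.trailSpace.Pt) (N : ℕ) : ∃ M, N ≤ ((t.1 M).1).length := by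
  apply len_unbounded (u := fun n => (t.1 n).1)
  · intro k l h
    exact trail_mono P t h
  · intro n
    obtain ⟨m, hm1, hm2⟩ := t.2.shrink n
    exact ⟨m, hm1, fun h => hm2 (Subtype.ext h)⟩

lemma trail_decide_dot (t : P.trailSpace.Pt) {x y : V} (h : P.apart x y) :
    ∃ m c, (t.1 m).1.getLast? = some c ∧ (P.apart c x ∨ P.apart c y) := by
  have hap : P.trailSpace.apart ⟨[x], List.isChain_singleton x⟩ ⟨[y], List.isChain_singleton y⟩ :=
    ⟨x, by simp, y, by simp, h⟩
  obtain ⟨m, hm⟩ := t.2.decides _ _ hap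
  rcases hm with hm | hm
  · obtain ⟨c, hc, d, hd, hcd⟩ := hm
    simp only [List.getLast?_singleton, Option.mem_def, Option.some_inj] at hd
    subst hd
    exact ⟨m, c, hc, Or.inl hcd⟩
  · obtain ⟨c, hc, d, hd, hcd⟩ := hm
    simp only [List.getLast?_singleton, Option.mem_def, Option.some_inj] at hd
    subst hd
    exact ⟨m, c, hc, Or.inr hcd⟩

/-! ### Growth of the scan output along a trail point -/

variable {P}
variable (mx : V) {e : ℕ → V} {pe : ℕ → V × V} {st : V → ℕ → V} {enc : V → ℕ}

lemma scan_growth (hmx : ∀ a, P.refines a mx) (t : P.trailSpace.Pt) (n : ℕ) :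
    ∃ M, n ≤ M ∧
      (scn P pe enc mx 0 (t.1 n).1).length < (scn P pe enc mx 0 (t.1 M).1).length := by
  set a' := fnl P pe mx 0 (t.1 n).1 with ha'
  set i' := (scn P pe enc mx 0 (t.1 n).1).length with hi'
  have hdec : ∃ m₁, P.apart (pe i').1 (pe i').2 →
      ∃ c, (t.1 m₁).1.getLast? = some c ∧ (P.apart c (pe i').1 ∨ P.apart c (pe i').2) := by
    by_cases hap : P.apart (pe i').1 (pe i').2
    · obtain ⟨m₁, c, hc, hcd⟩ := trail_decide_dot P t hap
      exact ⟨m₁, fun _ => ⟨c, hc, hcd⟩⟩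
    · exact ⟨0, fun h => absurd h hap⟩
  obtain ⟨m₁, hm₁⟩ := hdec
  obtain ⟨M₀, hM₀⟩ := trail_len_unbounded P t ((t.1 n).1.length + 2)
  set M := max M₀ (max n m₁) with hM
  have hnM : n ≤ M := le_max_of_le_right (le_max_left _ _)
  have hm₁M : m₁ ≤ M := le_max_of_le_right (le_max_right _ _)
  have hlenM : (t.1 n).1.length + 2 ≤ (t.1 M).1.length :=
    le_trans hM₀ (trail_mono P t (le_max_left _ _)).length_le
  obtain ⟨u, hu⟩ := trail_mono P t hnM
  have hune : u ≠ [] := by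
    rintro rfl
    rw [List.append_nil] at hu
    rw [hu] at hlenM
    omega
  have hMne : (t.1 M).1 ≠ [] := by
    intro h
    rw [h] at hlenM
    simp at hlenM
  have hbl : (t.1 M).1.getLast? = some ((t.1 M).1.getLast hMne) :=
    List.getLast?_eq_getLast hMne
  set b := (t.1 M).1.getLast hMne with hb
  have hbu : b ∈ u := by
    have h2 := hbl
    rw [← hu, List.getLast?_append_of_ne_nil _ hune] at h2
    exact List.mem_of_mem_getLast? h2
  have hchain : P.Chn (t.1 M).1 := (t.1 M).2
  have hnodup : (t.1 M).1.Nodup := P.chain_nodup hchain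
  have hOk : Ok P pe a' i' b := by
    constructor
    · rcases fnl_mem (t.1 n).1 mx 0 with hfa | hfa
      · rw [ha', hfa]
        refine ⟨hmx b, ?_⟩
        obtain ⟨h₀, rest, hcons⟩ : ∃ h₀ rest, (t.1 M).1 = h₀ :: rest := by
          cases hMl : (t.1 M).1 with
          | nil => exact absurd hMl hMne
          | cons h₀ rest => exact ⟨h₀, rest, rfl⟩
        have hrne : rest ≠ [] := by
          intro h
          rw [hcons, h] at hlenM
          simp at hlenM
        have hbrest : b ∈ rest := by
          have h2 := hbl
          rw [hcons, show h₀ :: rest = [h₀] ++ rest from rfl,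
            List.getLast?_append_of_ne_nil _ hrne] at h2
          exact List.mem_of_mem_getLast? h2
        have hh₀ : h₀ ∉ rest := by
          rw [hcons] at hnodup
          exact (List.nodup_cons.mp hnodup).1
        have hbh₀ : b ≠ h₀ := fun h => hh₀ (h ▸ hbrest)
        have hrb : P.refines b h₀ :=
          P.chain_last_refines hchain (by rw [hcons]; exact List.mem_cons_self) hbl
        intro hbmx
        exact hbh₀ (hbmx.trans (P.refines_antisymm _ _ (hbmx ▸ hrb) (hmx h₀)))
      · constructor
        · exact P.chain_last_refines hchain
            (by rw [← hu]; exact List.mem_append_left _ hfa) hbl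
        · intro hba'
          have hdisj := List.disjoint_of_nodup_append (by rw [hu]; exact hnodup)
          rw [hba'] at hbu
          exact hdisj hfa hbu
    · intro hap
      obtain ⟨c, hc, hcd⟩ := hm₁ hap
      have hrb : P.refines b c :=
        P.last_refines_of_prefix hchain (trail_mono P t hm₁M)
          (Option.mem_def.mpr hbl) (Option.mem_def.mpr hc)
      exact hcd.imp (P.apart_mono' hrb) (P.apart_mono' hrb)
  have h6 : scn P pe enc a' i' u ≠ [] := scn_ne_nil hbu hOk
  have h7 : 0 < (scn P pe enc a' (0 + i') u).length := by
    rw [Nat.zero_add]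
    exact List.length_pos_iff.mpr h6
  refine ⟨M, hnM, ?_⟩
  rw [← hu, scn_append, ← ha', ← hi']
  simp only [List.length_append]
  omega

lemma scn_out_unbounded (hmx : ∀ a, P.refines a mx) (t : P.trailSpace.Pt) (N : ℕ) :
    ∃ M, N ≤ (scn P pe enc mx 0 (t.1 M).1).length := by
  apply len_unbounded (u := fun M => scn P pe enc mx 0 (t.1 M).1)
  · intro k l h
    exact scn_mono (trail_mono P t h) mx 0
  · intro n
    obtain ⟨M, hnM, hlt⟩ := scan_growth mx hmx t n
    refine ⟨M, scn_mono (trail_mono P t hnM) mx 0, fun h => ?_⟩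
    rw [h] at hlt
    omega

/-! ### The morphisms -/

variable (hst : ∀ a i, Ok P pe a i (st a i)) (henc : ∀ v, e (enc v) = v)

lemma f_isPoint (henc2 : ∀ v, e (enc v) = v) (hmx : ∀ a, P.refines a mx)
    (tseq : ℕ → P.Trail) (htp : P.trailSpace.IsPoint tseq) :
    (Qs mx e hst).IsPoint (fun n => scn P pe enc mx 0 (tseq n).1) := by
  set t : P.trailSpace.Pt := ⟨tseq, htp⟩ with ht
  refine ⟨?_, ?_, ?_⟩
  · intro n
    exact scn_mono (trail_mono P t (Nat.le_succ n)) mx 0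
  · intro n
    obtain ⟨M, hnM, hlt⟩ := scan_growth mx hmx t n
    have hlt' : (scn P pe enc mx 0 (tseq n).1).length < (scn P pe enc mx 0 (tseq M).1).length := hlt
    have hpre : scn P pe enc mx 0 (tseq n).1 <+: scn P pe enc mx 0 (tseq M).1 :=
      scn_mono (trail_mono P t hnM) mx 0
    refine ⟨M, hpre, fun h => ?_⟩
    rw [h] at hlt'
    omega
  · intro s s' hap
    obtain ⟨m₁, c, hc, hcd⟩ := trail_decide_dot P t hap
    obtain ⟨M₀, hM₀⟩ := scn_out_unbounded mx hmx t ((tseq m₁).1.length)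
    set M := max M₀ m₁ with hM
    have h1 : (tseq m₁).1.length ≤ (scn P pe enc mx 0 (tseq M).1).length :=
      le_trans hM₀ (scn_mono (trail_mono P t (le_max_left _ _)) mx 0).length_le
    have hrf : P.refines (fnl P pe mx 0 (tseq M).1) c :=
      fnl_refines_last (tseq M).2 (trail_mono P t (le_max_right _ _)) h1 hc
    refine ⟨M, ?_⟩
    show P.apart (cc P mx e pe st (scn P pe enc mx 0 (tseq M).1)) (cc P mx e pe st s) ∨
      P.apart (cc P mx e pe st (scn P pe enc mx 0 (tseq M).1)) (cc P mx e pe st s')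
    have hccq : cc P mx e pe st (scn P pe enc mx 0 (tseq M).1) = fnl P pe mx 0 (tseq M).1 :=
      cA_scn henc2 _ mx 0
    rw [hccq]
    exact hcd.imp (P.apart_mono' hrf) (P.apart_mono' hrf)

lemma f_reflects (henc2 : ∀ v, e (enc v) = v) (hmx : ∀ a, P.refines a mx)
    (tseq tseq' : ℕ → P.Trail) (htp : P.trailSpace.IsPoint tseq)
    (htp' : P.trailSpace.IsPoint tseq')
    (h : ∃ n, (Qs mx e hst).apart (scn P pe enc mx 0 (tseq n).1) (scn P pe enc mx 0 (tseq' n).1)) :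
    ∃ n, P.trailSpace.apart (tseq n) (tseq' n) := by
  obtain ⟨n, hn⟩ := h
  set t : P.trailSpace.Pt := ⟨tseq, htp⟩ with ht
  set t' : P.trailSpace.Pt := ⟨tseq', htp'⟩ with ht'
  have hn2 : P.apart (cA P e pe st mx 0 (scn P pe enc mx 0 (tseq n).1))
      (cA P e pe st mx 0 (scn P pe enc mx 0 (tseq' n).1)) := hn
  rw [cA_scn henc2, cA_scn henc2] at hn2
  obtain ⟨M₁, hM₁⟩ := trail_len_unbounded P t 1
  obtain ⟨M₂, hM₂⟩ := trail_len_unbounded P t' 1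
  set M := max n (max M₁ M₂) with hM
  have hnM : n ≤ M := le_max_left _ _
  have hM₁M : M₁ ≤ M := le_trans (le_max_left M₁ M₂) (le_max_right n (max M₁ M₂))
  have hM₂M : M₂ ≤ M := le_trans (le_max_right M₁ M₂) (le_max_right n (max M₁ M₂))
  have hMne : (tseq M).1 ≠ [] := by
    have hh : 1 ≤ (tseq M).1.length := le_trans hM₁ (trail_mono P t hM₁M).length_le
    intro h'
    rw [h'] at hh
    simp at hh
  have hMne' : (tseq' M).1 ≠ [] := by
    have hh : 1 ≤ (tseq' M).1.length := le_trans hM₂ (trail_mono P t' hM₂M).length_le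
    intro h'
    rw [h'] at hh
    simp at hh
  have hr1 : P.refines ((tseq M).1.getLast hMne) (fnl P pe mx 0 (tseq n).1) := by
    rcases fnl_mem (tseq n).1 mx 0 with hf | hf
    · rw [hf]
      exact hmx _
    · exact P.chain_last_refines (tseq M).2
        ((trail_mono P t hnM).subset hf) (List.getLast?_eq_getLast hMne)
  have hr2 : P.refines ((tseq' M).1.getLast hMne') (fnl P pe mx 0 (tseq' n).1) := by
    rcases fnl_mem (tseq' n).1 mx 0 with hf | hf
    · rw [hf]
      exact hmx _
    · exact P.chain_last_refines (tseq' M).2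
        ((trail_mono P t' hnM).subset hf) (List.getLast?_eq_getLast hMne')
  refine ⟨M, (tseq M).1.getLast hMne, Option.mem_def.mpr (List.getLast?_eq_getLast hMne),
    (tseq' M).1.getLast hMne', Option.mem_def.mpr (List.getLast?_eq_getLast hMne'), ?_⟩
  exact P.apart_symm _ _ (P.apart_mono' hr2 (P.apart_symm _ _ (P.apart_mono' hr1 hn2)))

lemma g_isPoint (hpecof : ∀ (v : V × V) (N : ℕ), ∃ i, N ≤ i ∧ pe i = v)
    (q : ℕ → List ℕ) (hq : (Qs mx e hst).IsPoint q) :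
    P.IsPoint (fun n => cc P mx e pe st (q n)) := by
  refine ⟨?_, ?_, ?_⟩
  · intro n
    exact cc_mono mx e hst (hq.mono n)
  · intro n
    obtain ⟨m2, hm2⟩ := hq.shrink n
    exact ⟨m2, cc_strict mx e hst hm2.1 hm2.2⟩
  · intro x y hxy
    obtain ⟨i, _, hpei⟩ := hpecof (x, y) 0
    obtain ⟨M, hM⟩ := Qs_len_unbounded mx e hst ⟨q, hq⟩ (i + 1)
    have hM' : i + 1 ≤ (q M).length := hM
    have hd := cc_decides mx e hst (s := q M) (i := i) (by omega) (by rw [hpei]; exact hxy)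
    rw [hpei] at hd
    exact ⟨M, hd⟩

lemma Tp_isPoint {p : ℕ → V} (hp : P.IsPoint p) :
    P.trailSpace.IsPoint
      (fun n => (⟨segList p n, segList_chain P hp.mono n⟩ : P.Trail)) := by
  refine ⟨?_, ?_, ?_⟩
  · intro n
    exact segList_prefix p n
  · intro n
    cases n with
    | zero =>
      refine ⟨1, segList_prefix_le p (by omega), fun h => ?_⟩
      have hv : segList p 1 = segList p 0 := congrArg Subtype.val h
      exact segList_ne p 0 hv
    | succ k =>
      obtain ⟨j, hj⟩ := hp.shrink k
      have hkj : k ≤ j := by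
        by_contra hlt
        push_neg at hlt
        exact hj.2 (P.refines_antisymm _ _ hj.1 (P.refines_of_le hp.mono hlt.le))
      refine ⟨j + 1, segList_prefix_le p (by omega), fun h => ?_⟩
      have hv : segList p (j+1) = segList p (k+1) := congrArg Subtype.val h
      have h1 := segList_last p j
      have h2 := segList_last p k
      rw [hv, h2] at h1
      exact hj.2 (Option.some_inj.mp h1).symm
  · rintro A B ⟨x, hx, y, hy, hxy⟩
    obtain ⟨j, hj⟩ := hp.decides x y hxy
    rcases hj with hj | hj
    · exact ⟨j + 1, Or.inl ⟨p j, Option.mem_def.mpr (segList_last p j), x, hx, hj⟩⟩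
    · exact ⟨j + 1, Or.inr ⟨p j, Option.mem_def.mpr (segList_last p j), y, hy, hj⟩⟩

end Stmt10Aux2

end Stmt10Aux

open Stmt10Aux Stmt10Aux2 in
/-- classical: every natural space is spreadlike; indeed isomorphic
to a spread whose underlying tree is the tree `(ℕ*,⊑)` of natural Baire space. -/
theorem stmt10 {V : Type} (P : PreNaturalSpace V) (hP : P.IsNaturalSpace) :
    ∃ Q : PreNaturalSpace (List ℕ), Q.refines = BairePre.refines ∧
      Q.IsSpread ∧ Q.IsNaturalSpace ∧ P.AreIsomorphic Q := by
  classical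
  obtain ⟨⟨mx, hmx⟩, hinh⟩ := hP
  haveI := P.countable'
  have hne : Nonempty V := ⟨mx⟩
  obtain ⟨e, he⟩ := exists_surjective_nat V
  obtain ⟨ee, hee⟩ := exists_surjective_nat (V × V)
  choose enc henc using he
  set pe : ℕ → V × V := fun i => ee (Nat.unpair i).1 with hpedef
  have hpecof : ∀ (v : V × V) (N : ℕ), ∃ i, N ≤ i ∧ pe i = v := by
    intro v N
    obtain ⟨k, hk⟩ := hee v
    refine ⟨Nat.pair k N, Nat.right_le_pair k N, ?_⟩
    simp [hpedef, Nat.unpair_pair, hk]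
  have hstep : ∀ (a : V) (i : ℕ), ∃ b, Stmt10Aux.Ok P pe a i b := by
    intro a i
    obtain ⟨p, hp, k, hk⟩ := hinh a
    by_cases hap : P.apart (pe i).1 (pe i).2
    · obtain ⟨mm, hmm⟩ := hp.decides _ _ hap
      refine ⟨p (max k mm), ?_, fun _ => ?_⟩
      · exact P.strict_of_refines_strict (P.refines_of_le hp.mono (le_max_left _ _)) hk
      · exact hmm.imp (P.apart_mono' (P.refines_of_le hp.mono (le_max_right _ _)))
          (P.apart_mono' (P.refines_of_le hp.mono (le_max_right _ _)))
    · exact ⟨p k, hk, fun h => absurd h hap⟩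
  choose st hst using hstep
  refine ⟨Qs mx e hst, rfl, ⟨Qs_isTree mx e hst, Qs_succTrails mx e hst hpecof⟩,
    Qs_natural mx e hst hpecof, ?_⟩
  have hTp : ∀ p : P.Pt, P.trailSpace.IsPoint
      (fun n => (⟨segList p.1 n, segList_chain P p.2.mono n⟩ : P.Trail)) :=
    fun p => Tp_isPoint p.2
  let Tp : P.Pt → P.trailSpace.Pt := fun p => ⟨_, hTp p⟩
  let fR : RefMorphism P.trailSpace (Qs mx e hst) :=
    { toFun := fun tr => scn P pe enc mx 0 tr.1
      maps_points := fun tseq htp => f_isPoint mx hst henc hmx tseq htp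
      reflects_apart := fun tseq tseq' htp htp' h =>
        f_reflects mx hst henc hmx tseq tseq' htp htp' h }
  let gR : RefMorphism (Qs mx e hst) P :=
    { toFun := fun s => cc P mx e pe st s
      maps_points := fun q hq => g_isPoint mx hst hpecof q hq
      reflects_apart := fun _ _ _ _ h => h }
  refine ⟨fun p => fR.pointMap (Tp p), gR.pointMap,
    Or.inr ⟨fR, fun p => ⟨Tp p, fun n => rfl, rfl⟩⟩,
    Or.inl ⟨gR, fun q => rfl⟩, ?_, ?_⟩
  · rintro x ⟨n, hn⟩
    have hn' : P.apart (cA P e pe st mx 0 (scn P pe enc mx 0 (segList x.1 n))) (x.1 n) := hn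
    rw [cA_scn henc] at hn'
    rcases fnl_mem (segList x.1 n) mx 0 with hf | hf
    · rw [hf] at hn'
      exact P.not_apart_of_refines' (hmx (x.1 n)) hn'
    · obtain ⟨j, _, hj⟩ := segList_mem hf
      rw [hj] at hn'
      exact P.point_not_apart x.2 j n hn'
  · rintro y ⟨n, hn⟩
    have hn' : P.apart
        (cA P e pe st mx 0 (scn P pe enc mx 0 (segList (fun k => cc P mx e pe st (y.1 k)) n)))
        (cc P mx e pe st (y.1 n)) := hn
    rw [cA_scn henc] at hn'
    rcases fnl_mem (segList (fun k => cc P mx e pe st (y.1 k)) n) mx 0 with hf | hf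
    · rw [hf] at hn'
      exact P.not_apart_of_refines' (hmx _) hn'
    · obtain ⟨j, _, hj⟩ := segList_mem hf
      rw [hj] at hn'
      rcases le_total j n with h | h
      · exact P.not_apart_of_refines'
          (cc_mono mx e hst ((Qs mx e hst).refines_of_le y.2.mono h)) hn'
      · exact P.not_apart_of_refines
          (cc_mono mx e hst ((Qs mx e hst).refines_of_le y.2.mono h)) hn'
end Stmt10Aux
end

section
/- (In classical logic.) For every natural space 𝒱 there is a refinement morphism f from natural Baire space ℬ to 𝒱 that is surjective up to equivalence: for every point x of 𝒱 there is a point p of ℬ with f(p) ≡ x. -/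
namespace Stmt11

variable {V : Type} (P : PreNaturalSpace V)

lemma not_apart_of_refines {a b : V} (h : P.refines a b) : ¬ P.apart a b :=
  fun ha => P.apart_irrefl a (P.apart_mono a b a h ha)

lemma not_apart_of_refines' {a b : V} (h : P.refines a b) : ¬ P.apart b a :=
  fun ha => not_apart_of_refines P h (P.apart_symm _ _ ha)

lemma strict_of_strict_refines {a b c : V} (h1 : P.strict a b) (h2 : P.refines b c) :
    P.strict a c := by
  refine ⟨P.refines_trans _ _ _ h1.1 h2, fun he => h1.2 ?_⟩
  subst he
  exact P.refines_antisymm _ _ h1.1 h2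

lemma tail_strict {x : ℕ → V} (hx : P.IsPoint x) {c : V} (h : P.begins x c) :
    ∃ j, ∀ m, j ≤ m → P.strict (x m) c := by
  obtain ⟨j, hj⟩ := h
  refine ⟨j, fun m hm => ?_⟩
  have hr : P.refines (x m) (x j) := P.refines_of_le hx.mono hm
  refine ⟨P.refines_trans _ _ _ hr hj.1, fun he => hj.2 ?_⟩
  exact P.refines_antisymm _ _ hj.1 (he ▸ hr)

lemma tail_decides {x : ℕ → V} (hx : P.IsPoint x) {u v : V} (h : P.apart u v) :
    ∃ j, ∀ m, j ≤ m → P.apart (x m) u ∨ P.apart (x m) v := by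
  obtain ⟨j, hj⟩ := hx.decides u v h
  refine ⟨j, fun m hm => ?_⟩
  have hr : P.refines (x m) (x j) := P.refines_of_le hx.mono hm
  rcases hj with hj | hj
  · exact Or.inl (P.apart_symm _ _ (P.apart_mono _ _ _ hr (P.apart_symm _ _ hj)))
  · exact Or.inr (P.apart_symm _ _ (P.apart_mono _ _ _ hr (P.apart_symm _ _ hj)))

lemma exists_next (hA : P.AllDotsInhabited) (c u v : V) :
    ∃ d : V, P.strict d c ∧ (P.apart u v → P.apart d u ∨ P.apart d v) := by
  obtain ⟨x, hx, hb⟩ := hA c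
  obtain ⟨j1, hj1⟩ := tail_strict P hx hb
  by_cases h : P.apart u v
  · obtain ⟨j2, hj2⟩ := tail_decides P hx h
    exact ⟨x (max j1 j2), hj1 _ (le_max_left _ _), fun _ => hj2 _ (le_max_right _ _)⟩
  · exact ⟨x j1, hj1 _ le_rfl, fun h' => absurd h' h⟩

variable (hA : P.AllDotsInhabited) (σ : ℕ → V × V) (e : ℕ → V) (M : V)

open Classical in
/-- One step of the universal map: at depth `k`, below current dot `c`, with input `n`. -/
noncomputable def step (k : ℕ) (c : V) (n : ℕ) : V :=
  if P.strict (e n) c ∧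
      (P.apart (σ k).1 (σ k).2 → P.apart (e n) (σ k).1 ∨ P.apart (e n) (σ k).2)
  then e n else (exists_next P hA c (σ k).1 (σ k).2).choose

lemma step_strict (k : ℕ) (c : V) (n : ℕ) : P.strict (step P hA σ e k c n) c := by
  unfold step
  split
  · next h => exact h.1
  · exact (exists_next P hA c (σ k).1 (σ k).2).choose_spec.1

lemma step_req (k : ℕ) (c : V) (n : ℕ) (h : P.apart (σ k).1 (σ k).2) :
    P.apart (step P hA σ e k c n) (σ k).1 ∨ P.apart (step P hA σ e k c n) (σ k).2 := by
  unfold step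
  split
  · next h' => exact h'.2 h
  · exact (exists_next P hA c (σ k).1 (σ k).2).choose_spec.2 h

lemma step_eq (k : ℕ) (c : V) (n : ℕ)
    (h : P.strict (e n) c ∧
      (P.apart (σ k).1 (σ k).2 → P.apart (e n) (σ k).1 ∨ P.apart (e n) (σ k).2)) :
    step P hA σ e k c n = e n := by
  unfold step
  split
  · rfl
  · next h' => exact absurd h h'

/-- The universal map on reversed lists. -/
noncomputable def go : List ℕ → V
  | [] => M
  | n :: t => step P hA σ e t.length (go t) n

/-- The universal map on dots of Baire space. -/
noncomputable def fdot (l : List ℕ) : V := go P hA σ e M l.reverse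

lemma fdot_nil : fdot P hA σ e M [] = M := rfl

lemma fdot_snoc (l : List ℕ) (n : ℕ) :
    fdot P hA σ e M (l ++ [n]) = step P hA σ e l.length (fdot P hA σ e M l) n := by
  simp [fdot, go]

lemma fdot_snoc_strict (l : List ℕ) (n : ℕ) :
    P.strict (fdot P hA σ e M (l ++ [n])) (fdot P hA σ e M l) := by
  rw [fdot_snoc]; exact step_strict P hA σ e _ _ _

lemma fdot_mono {l l' : List ℕ} (h : l <+: l') :
    P.refines (fdot P hA σ e M l') (fdot P hA σ e M l) := by
  obtain ⟨t, rfl⟩ := h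
  induction t using List.reverseRecOn with
  | nil => simpa using P.refines_refl _
  | append_singleton t x ih =>
    rw [← List.append_assoc]
    exact P.refines_trans _ _ _ (fdot_snoc_strict P hA σ e M (l ++ t) x).1 ih

lemma fdot_strict {l l' : List ℕ} (h : l <+: l') (hne : l' ≠ l) :
    P.strict (fdot P hA σ e M l') (fdot P hA σ e M l) := by
  obtain ⟨t, rfl⟩ := h
  induction t using List.reverseRecOn with
  | nil => simp at hne
  | append_singleton t x ih =>
    rw [← List.append_assoc]
    exact strict_of_strict_refines P (fdot_snoc_strict P hA σ e M (l ++ t) x)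
      (fdot_mono P hA σ e M ⟨t, rfl⟩)

lemma fdot_req (l : List ℕ) (n : ℕ) (h : P.apart (σ l.length).1 (σ l.length).2) :
    P.apart (fdot P hA σ e M (l ++ [n])) (σ l.length).1 ∨
      P.apart (fdot P hA σ e M (l ++ [n])) (σ l.length).2 := by
  rw [fdot_snoc]; exact step_req P hA σ e _ _ _ h

lemma baire_lengths {p : ℕ → List ℕ} (hp : BairePre.IsPoint p) :
    ∀ N, ∃ m, N ≤ (p m).length := by
  intro N
  induction N with
  | zero => exact ⟨0, Nat.zero_le _⟩
  | succ N ih =>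
    obtain ⟨m, hm⟩ := ih
    obtain ⟨j, hj⟩ := hp.shrink m
    have hpre : p m <+: p j := hj.1
    have hlt : (p m).length < (p j).length := by
      rcases lt_or_eq_of_le hpre.length_le with h | h
      · exact h
      · exact absurd (hpre.eq_of_length h).symm hj.2
    exact ⟨j, by omega⟩

lemma maps_points (hσ : ∀ u v : V, P.apart u v → ∃ k, σ k = (u, v))
    (p : ℕ → List ℕ) (hp : BairePre.IsPoint p) :
    P.IsPoint (fun n => fdot P hA σ e M (p n)) := by
  constructor
  · intro n
    exact fdot_mono P hA σ e M (hp.mono n)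
  · intro n
    obtain ⟨m, hm⟩ := hp.shrink n
    exact ⟨m, fdot_strict P hA σ e M hm.1 hm.2⟩
  · intro u v huv
    obtain ⟨k, hk⟩ := hσ u v huv
    obtain ⟨m, hm⟩ := baire_lengths hp (k + 1)
    -- decompose p m at depth k+1
    set l1 : List ℕ := (p m).take (k + 1) with hl1
    have hl1ne : l1 ≠ [] := by
      apply List.ne_nil_of_length_pos
      rw [hl1, List.length_take]
      omega
    have hl1len : l1.length = k + 1 := by rw [hl1, List.length_take]; omega
    have hdecomp : l1.dropLast ++ [l1.getLast hl1ne] = l1 :=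
      List.dropLast_append_getLast hl1ne
    have hdllen : l1.dropLast.length = k := by
      rw [List.length_dropLast, hl1len]; omega
    have hreq := fdot_req P hA σ e M l1.dropLast (l1.getLast hl1ne)
    rw [hdllen, hk, hdecomp] at hreq
    have hpre : l1 <+: p m := List.take_prefix _ _
    have hr : P.refines (fdot P hA σ e M (p m)) (fdot P hA σ e M l1) :=
      fdot_mono P hA σ e M hpre
    rcases hreq huv with h | h
    · exact ⟨m, Or.inl (P.apart_symm _ _ (P.apart_mono _ _ _ hr (P.apart_symm _ _ h)))⟩
    · exact ⟨m, Or.inr (P.apart_symm _ _ (P.apart_mono _ _ _ hr (P.apart_symm _ _ h)))⟩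

lemma reflects_apart (p q : ℕ → List ℕ)
    (h : ∃ n, P.apart (fdot P hA σ e M (p n)) (fdot P hA σ e M (q n))) :
    ∃ n, BairePre.apart (p n) (q n) := by
  obtain ⟨n, hn⟩ := h
  refine ⟨n, ?_⟩
  by_contra hc
  have hc' : ¬ (¬ p n <+: q n ∧ ¬ q n <+: p n) := hc
  rcases not_and_or.mp hc' with h' | h' <;> rw [not_not] at h'
  · exact not_apart_of_refines P (fdot_mono P hA σ e M h') (P.apart_symm _ _ hn)
  · exact not_apart_of_refines P (fdot_mono P hA σ e M h') hn

lemma begins_max {x : ℕ → V} (hx : P.IsPoint x) (hM : ∀ a, P.refines a M) :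
    P.begins x M := by
  obtain ⟨m, hm⟩ := hx.shrink 0
  refine ⟨m, hM _, fun he => hm.2 ?_⟩
  exact P.refines_antisymm _ _ hm.1 (he ▸ hM (x 0))

lemma exists_goodstep (he : Function.Surjective e) {x : ℕ → V} (hx : P.IsPoint x)
    (c : V) (k N : ℕ) (h : P.begins x c) :
    ∃ nj : ℕ × ℕ, e nj.1 = x nj.2 ∧ N ≤ nj.2 ∧ P.strict (x nj.2) c ∧
      (P.apart (σ k).1 (σ k).2 → P.apart (x nj.2) (σ k).1 ∨ P.apart (x nj.2) (σ k).2) := by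
  obtain ⟨j1, hj1⟩ := tail_strict P hx h
  by_cases hp : P.apart (σ k).1 (σ k).2
  · obtain ⟨j2, hj2⟩ := tail_decides P hx hp
    set j := max (max j1 j2) N
    obtain ⟨n, hn⟩ := he (x j)
    exact ⟨(n, j), hn, le_max_right _ _,
      hj1 _ (le_trans (le_max_left _ _) (le_max_left _ _)),
      fun _ => hj2 _ (le_trans (le_max_right _ _) (le_max_left _ _))⟩
  · obtain ⟨n, hn⟩ := he (x (max j1 N))
    exact ⟨(n, max j1 N), hn, le_max_right _ _, hj1 _ (le_max_left _ _),
      fun h' => absurd h' hp⟩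

open Classical in
noncomputable def pick (he : Function.Surjective e) {x : ℕ → V} (hx : P.IsPoint x)
    (c : V) (k N : ℕ) : ℕ × ℕ :=
  if h : P.begins x c then (exists_goodstep P σ e he hx c k N h).choose else (0, 0)

/-- The recursively constructed approximating sequence: `(list so far, index into x)`. -/
noncomputable def F (he : Function.Surjective e) {x : ℕ → V} (hx : P.IsPoint x) :
    ℕ → List ℕ × ℕ
  | 0 => ([], 0)
  | k + 1 =>
    let lj := F he hx k
    let nj := pick P σ e he hx (fdot P hA σ e M lj.1) k (max (k + 1) (lj.2 + 1))
    (lj.1 ++ [nj.1], nj.2)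

lemma F_invariant (hM : ∀ a, P.refines a M) (he : Function.Surjective e)
    {x : ℕ → V} (hx : P.IsPoint x) : ∀ k,
    (F P hA σ e M he hx k).1.length = k ∧
    P.begins x (fdot P hA σ e M (F P hA σ e M he hx k).1) ∧
    (0 < k → fdot P hA σ e M (F P hA σ e M he hx k).1 = x (F P hA σ e M he hx k).2 ∧
      k ≤ (F P hA σ e M he hx k).2) := by
  intro k
  induction k with
  | zero =>
    refine ⟨rfl, ?_, fun h => absurd h (lt_irrefl 0)⟩
    have h0 : (F P hA σ e M he hx 0).1 = [] := rfl
    rw [h0, fdot_nil]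
    exact begins_max P M hx hM
  | succ k ih =>
    obtain ⟨hlen, hbeg, _⟩ := ih
    set lj := F P hA σ e M he hx k with hlj
    have hF1 : F P hA σ e M he hx (k + 1) =
        (lj.1 ++ [(pick P σ e he hx (fdot P hA σ e M lj.1) k (max (k + 1) (lj.2 + 1))).1],
          (pick P σ e he hx (fdot P hA σ e M lj.1) k (max (k + 1) (lj.2 + 1))).2) := rfl
    have hpick : pick P σ e he hx (fdot P hA σ e M lj.1) k (max (k + 1) (lj.2 + 1)) =
        (exists_goodstep P σ e he hx (fdot P hA σ e M lj.1) k (max (k + 1) (lj.2 + 1)) hbeg).choose := by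
      rw [pick, dif_pos hbeg]
    obtain ⟨hen, hN, hstrict, hreq⟩ :=
      (exists_goodstep P σ e he hx (fdot P hA σ e M lj.1) k (max (k + 1) (lj.2 + 1)) hbeg).choose_spec
    set nj := (exists_goodstep P σ e he hx (fdot P hA σ e M lj.1) k
      (max (k + 1) (lj.2 + 1)) hbeg).choose with hnj
    rw [hF1, hpick]
    have hfd : fdot P hA σ e M (lj.1 ++ [nj.1]) = x nj.2 := by
      rw [fdot_snoc, hlen]
      rw [step_eq P hA σ e k _ nj.1 (by rw [hen]; exact ⟨hstrict, hreq⟩)]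
      exact hen
    refine ⟨by simp [hlen], ?_, fun _ => ⟨hfd, le_trans (le_max_left _ _) hN⟩⟩
    rw [hfd]
    exact hx.shrink nj.2

lemma F_prefix (he : Function.Surjective e) {x : ℕ → V} (hx : P.IsPoint x)
    {m k : ℕ} (h : m ≤ k) : (F P hA σ e M he hx m).1 <+: (F P hA σ e M he hx k).1 := by
  induction h with
  | refl => exact List.prefix_refl _
  | step h ih =>
    refine ih.trans ?_
    exact ⟨_, rfl⟩

lemma baire_decides_of_lengths (p : ℕ → List ℕ) (hlen : ∀ N, ∃ m, N ≤ (p m).length) :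
    ∀ a b : List ℕ, BairePre.apart a b →
      ∃ m, BairePre.apart (p m) a ∨ BairePre.apart (p m) b := by
  intro a b hab
  obtain ⟨m, hm⟩ := hlen (max a.length b.length + 1)
  refine ⟨m, ?_⟩
  have hna : ¬ p m <+: a := fun h => by have := h.length_le; omega
  have hnb : ¬ p m <+: b := fun h => by have := h.length_le; omega
  by_cases ha : a <+: p m
  · refine Or.inr ⟨hnb, fun hb => ?_⟩
    rcases List.prefix_or_prefix_of_prefix ha hb with h | h
    · exact hab.1 h
    · exact hab.2 h
  · exact Or.inl ⟨hna, ha⟩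

end Stmt11

/-- classical: for every natural space `𝒱` there is a refinement
morphism from natural Baire space to `𝒱`, surjective up to equivalence. -/
theorem stmt11 {V : Type} (P : PreNaturalSpace V) (hP : P.IsNaturalSpace) :
    ∃ f : RefMorphism BairePre P, ∀ x : P.Pt, ∃ p : BairePre.Pt,
      P.pEquiv (f.pointMap p) x := by
  classical
  obtain ⟨⟨M, hM⟩, hA⟩ := hP
  haveI : Nonempty V := ⟨M⟩
  haveI := P.countable'
  obtain ⟨e, he⟩ := exists_surjective_nat V
  obtain ⟨σ, hσ'⟩ := exists_surjective_nat (V × V)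
  have hσ : ∀ u v : V, P.apart u v → ∃ k, σ k = (u, v) := fun u v _ => hσ' (u, v)
  refine ⟨⟨Stmt11.fdot P hA σ e M, Stmt11.maps_points P hA σ e M hσ,
    fun p q hp hq h => Stmt11.reflects_apart P hA σ e M p q h⟩, ?_⟩
  rintro ⟨x, hx⟩
  -- the approximating Baire point
  set L : ℕ → List ℕ := fun k => (Stmt11.F P hA σ e M he hx k).1 with hL
  have hinv := Stmt11.F_invariant P hA σ e M hM he hx
  have hLlen : ∀ k, (L k).length = k := fun k => (hinv k).1
  have hmono : ∀ n, L n <+: L (n + 1) := fun n =>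
    Stmt11.F_prefix P hA σ e M he hx (Nat.le_succ n)
  have hmono' : ∀ {m k : ℕ}, m ≤ k → L m <+: L k := fun {m k} h =>
    Stmt11.F_prefix P hA σ e M he hx h
  have hpt : BairePre.IsPoint L := by
    constructor
    · intro n
      exact hmono n
    · intro n
      refine ⟨n + 1, hmono n, fun h => ?_⟩
      have := hLlen n
      have := hLlen (n + 1)
      rw [h] at this
      omega
    · exact Stmt11.baire_decides_of_lengths L (fun N => ⟨N, (hLlen N).ge⟩)
  refine ⟨⟨L, hpt⟩, ?_⟩
  rintro ⟨n, hn⟩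
  have hn' : P.apart (Stmt11.fdot P hA σ e M (L n)) (x n) := hn
  rcases Nat.eq_zero_or_pos n with rfl | hpos
  · have h0 : L 0 = [] := rfl
    rw [h0, Stmt11.fdot_nil] at hn'
    exact Stmt11.not_apart_of_refines' P (hM (x 0)) hn'
  · obtain ⟨hfd, hle⟩ := (hinv n).2.2 hpos
    have hLn : L n = (Stmt11.F P hA σ e M he hx n).1 := rfl
    rw [hLn, hfd] at hn'
    have hr : P.refines (x (Stmt11.F P hA σ e M he hx n).2) (x n) :=
      P.refines_of_le hx.mono hle
    exact Stmt11.not_apart_of_refines P hr hn'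
end
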